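/- arXiv:1702.06444 — 2 statements merged into one kernel-verified Lean document; each statement's English description precedes it below -/
import Mathlib

section
/- Let (X_i)_{i≥0} be a stationary sequence of nonnegative integrable real random variables that is mixing, i.e., for all n, m and all bounded measurable f : ℝ^{n+1} → ℝ and g : ℝ^{m+1} → ℝ, E[f(X_0,…,X_n) g(X_k,…,X_{k+m})] → E[f(X_0,…,X_n)] E[g(X_0,…,X_m)] as k → ∞. Then (1/n) Σ_{i=0}^{n-1} X_i converges almost surely to E[X_0]. -/
open MeasureTheory ProbabilityTheory Filter

open Set ENNReal
open scoped symmDiff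

namespace Stmt3Aux

/-- Covering lemma, lower bound direction. -/
lemma cover_lower (a : ℝ) (ha : 0 ≤ a) (N : ℕ) :
    ∀ L : ℕ, ∀ (u : ℕ → ℝ), (∀ k, 0 ≤ u k) → ∀ (bad : ℕ → Prop) (_ : DecidablePred bad),
    (∀ k, ¬ bad k → ∃ m, 1 ≤ m ∧ m ≤ N ∧ a * m ≤ ∑ i ∈ Finset.range m, u (k + i)) →
    a * ((L : ℝ) - N - ∑ k ∈ Finset.range L, (if bad k then (1:ℝ) else 0))
      ≤ ∑ k ∈ Finset.range L, u k := by
  intro L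
  induction L using Nat.strong_induction_on with
  | _ L IH =>
    intro u hu bad inst hb
    rcases Nat.eq_zero_or_pos L with rfl | hL
    · simp only [Nat.cast_zero, Finset.range_zero, Finset.sum_empty]
      nlinarith [mul_nonneg ha (Nat.cast_nonneg (α := ℝ) N)]
    · by_cases h0 : bad 0
      · -- recurse on length L - 1 with shifted sequence
        obtain ⟨L', rfl⟩ : ∃ L', L = L' + 1 := ⟨L - 1, by omega⟩
        have key := IH L' (by omega) (fun k => u (k + 1)) (fun k => hu _)
          (fun k => bad (k + 1)) (fun k => inst _) ?_
        · have hsum : ∑ k ∈ Finset.range (L' + 1), u k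
              = (∑ k ∈ Finset.range L', u (k + 1)) + u 0 := Finset.sum_range_succ' u L'
          have hcard : ∑ k ∈ Finset.range (L' + 1), (if bad k then (1:ℝ) else 0)
              = (∑ k ∈ Finset.range L', (if bad (k + 1) then (1:ℝ) else 0))
                + (if bad 0 then (1:ℝ) else 0) := Finset.sum_range_succ' _ L'
          rw [hsum, hcard, if_pos h0]
          push_cast
          nlinarith [hu 0, key]
        · intro k hk
          obtain ⟨m, h1, h2, h3⟩ := hb (k + 1) hk
          exact ⟨m, h1, h2, by
            convert h3 using 2 with i _
            ring_nf⟩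
      · obtain ⟨m, hm1, hmN, hmsum⟩ := hb 0 h0
        simp only [zero_add] at hmsum
        by_cases hLm : L ≤ m
        · have h1 : ((L:ℝ) - N - ∑ k ∈ Finset.range L, (if bad k then (1:ℝ) else 0)) ≤ 0 := by
            have h2 : (0:ℝ) ≤ ∑ k ∈ Finset.range L, (if bad k then (1:ℝ) else 0) :=
              Finset.sum_nonneg fun k _ => by by_cases h : bad k <;> simp [h]
            have : (L:ℝ) ≤ N := by exact_mod_cast hLm.trans hmN
            linarith
          have h2 : 0 ≤ ∑ k ∈ Finset.range L, u k := Finset.sum_nonneg fun k _ => hu k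
          nlinarith
        · push_neg at hLm
          obtain ⟨R, rfl⟩ : ∃ R, L = m + R := ⟨L - m, by omega⟩
          have key := IH R (by omega) (fun k => u (m + k)) (fun k => hu _)
            (fun k => bad (m + k)) (fun k => inst _) (fun k hk => by
              obtain ⟨m', h1, h2, h3⟩ := hb (m + k) hk
              exact ⟨m', h1, h2, by
                convert h3 using 2 with i _
                ring_nf⟩)
          rw [Finset.sum_range_add, Finset.sum_range_add]
          have hcnn : 0 ≤ ∑ k ∈ Finset.range m, (if bad k then (1:ℝ) else 0) :=
            Finset.sum_nonneg fun k _ => by by_cases h : bad k <;> simp [h]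
          push_cast
          nlinarith [key, hmsum]

/-- Covering lemma, upper bound direction. -/
lemma cover_upper (a : ℝ) (ha : 0 ≤ a) (N : ℕ) :
    ∀ L : ℕ, ∀ (u : ℕ → ℝ), (∀ k, 0 ≤ u k) → ∀ (bad : ℕ → Prop) (_ : DecidablePred bad),
    (∀ k, ¬ bad k → ∃ m, 1 ≤ m ∧ m ≤ N ∧ (∑ i ∈ Finset.range m, u (k + i)) ≤ a * m) →
    ∑ k ∈ Finset.range L, u k
      ≤ a * ((L : ℝ) + N) + (∑ k ∈ Finset.range L, (if bad k then u k else 0))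
        + ∑ i ∈ Finset.range N, u (L + i) := by
  intro L
  induction L using Nat.strong_induction_on with
  | _ L IH =>
    intro u hu bad inst hb
    have htail : ∀ M : ℕ, 0 ≤ ∑ i ∈ Finset.range N, u (M + i) :=
      fun M => Finset.sum_nonneg fun i _ => hu _
    have hbadnn : ∀ M : ℕ, 0 ≤ ∑ k ∈ Finset.range M, (if bad k then u k else 0) :=
      fun M => Finset.sum_nonneg fun k _ => by
        by_cases h : bad k <;> simp [h, hu k]
    rcases Nat.eq_zero_or_pos L with rfl | hL
    · simp only [Nat.cast_zero, Finset.range_zero, Finset.sum_empty, zero_add]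
      have h1 := htail 0
      simp only [zero_add] at h1
      nlinarith [mul_nonneg ha (Nat.cast_nonneg (α := ℝ) N)]
    · by_cases h0 : bad 0
      · obtain ⟨L', rfl⟩ : ∃ L', L = L' + 1 := ⟨L - 1, by omega⟩
        have key := IH L' (by omega) (fun k => u (k + 1)) (fun k => hu _)
          (fun k => bad (k + 1)) (fun k => inst _) (fun k hk => by
            obtain ⟨m, h1, h2, h3⟩ := hb (k + 1) hk
            exact ⟨m, h1, h2, by
              convert h3 using 2 with i _
              ring_nf⟩)
        have hsum : ∑ k ∈ Finset.range (L' + 1), u k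
            = (∑ k ∈ Finset.range L', u (k + 1)) + u 0 := Finset.sum_range_succ' u L'
        have hbadsum : ∑ k ∈ Finset.range (L' + 1), (if bad k then u k else 0)
            = (∑ k ∈ Finset.range L', (if bad (k + 1) then u (k + 1) else 0))
              + (if bad 0 then u 0 else 0) := Finset.sum_range_succ' _ L'
        have htaileq : ∑ i ∈ Finset.range N, u (L' + i + 1)
            = ∑ i ∈ Finset.range N, u (L' + 1 + i) := by
          apply Finset.sum_congr rfl; intro i _; ring_nf
        rw [hsum, hbadsum, if_pos h0]
        push_cast
        nlinarith [key, htaileq]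
      · obtain ⟨m, hm1, hmN, hmsum⟩ := hb 0 h0
        simp only [zero_add] at hmsum
        by_cases hLm : L ≤ m
        · have h1 : ∑ k ∈ Finset.range L, u k ≤ ∑ k ∈ Finset.range m, u k :=
            Finset.sum_le_sum_of_subset_of_nonneg
              (Finset.range_subset_range.2 hLm) (fun i _ _ => hu i)
          have h2 : (m:ℝ) ≤ (L:ℝ) + N := by
            have h3 : (m:ℝ) ≤ N := by exact_mod_cast hmN
            have h4 : (0:ℝ) ≤ L := Nat.cast_nonneg L
            linarith
          have h5 := hbadnn L
          have h6 := htail L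
          nlinarith [mul_le_mul_of_nonneg_left h2 ha]
        · push_neg at hLm
          obtain ⟨R, rfl⟩ : ∃ R, L = m + R := ⟨L - m, by omega⟩
          have key := IH R (by omega) (fun k => u (m + k)) (fun k => hu _)
            (fun k => bad (m + k)) (fun k => inst _) (fun k hk => by
              obtain ⟨m', h1, h2, h3⟩ := hb (m + k) hk
              exact ⟨m', h1, h2, by
                convert h3 using 2 with i _
                ring_nf⟩)
          rw [Finset.sum_range_add, Finset.sum_range_add (fun k => if bad k then u k else 0)]
          have htaileq : ∑ i ∈ Finset.range N, u (m + (R + i))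
              = ∑ i ∈ Finset.range N, u (m + R + i) := by
            apply Finset.sum_congr rfl; intro i _; ring_nf
          have hbnn : 0 ≤ ∑ k ∈ Finset.range m, (if bad k then u k else 0) := hbadnn m
          push_cast
          nlinarith [key, htaileq, hmsum]


lemma bddTop {w : ℕ → ℝ≥0∞} : IsBoundedUnder (· ≤ ·) atTop w :=
  ⟨⊤, Filter.eventually_map.mpr (Filter.Eventually.of_forall fun _ => le_top)⟩

lemma bddBot {w : ℕ → ℝ≥0∞} : IsBoundedUnder (· ≥ ·) atTop w :=
  ⟨0, Filter.eventually_map.mpr (Filter.Eventually.of_forall fun _ => zero_le)⟩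

lemma limsup_add_small {w d : ℕ → ℝ≥0∞} (hd : Tendsto d atTop (nhds 0)) :
    limsup (fun n => w n + d n) atTop ≤ limsup w atTop := by
  refine ENNReal.le_of_forall_pos_le_add fun ε hε _ => ?_
  have hev : ∀ᶠ n in atTop, d n < (ε : ℝ≥0∞) := hd.eventually_lt_const (by exact_mod_cast hε)
  have h1 : limsup (fun n => w n + d n) atTop ≤ limsup (fun n => w n + (ε : ℝ≥0∞)) atTop := by
    refine limsup_le_limsup ?_
    filter_upwards [hev] with n hn using add_le_add le_rfl hn.le
  refine h1.trans_eq ?_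
  exact limsup_add_const atTop w (ε : ℝ≥0∞) bddTop bddBot.isCoboundedUnder_le

lemma liminf_add_small {w d : ℕ → ℝ≥0∞} (hd : Tendsto d atTop (nhds 0)) :
    liminf (fun n => w n + d n) atTop ≤ liminf w atTop := by
  refine ENNReal.le_of_forall_pos_le_add fun ε hε _ => ?_
  have hev : ∀ᶠ n in atTop, d n < (ε : ℝ≥0∞) := hd.eventually_lt_const (by exact_mod_cast hε)
  have h1 : liminf (fun n => w n + d n) atTop ≤ liminf (fun n => w n + (ε : ℝ≥0∞)) atTop := by
    refine liminf_le_liminf ?_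
    filter_upwards [hev] with n hn using add_le_add le_rfl hn.le
  refine h1.trans_eq ?_
  exact liminf_add_const atTop w (ε : ℝ≥0∞) bddTop.isCoboundedUnder_ge bddBot

lemma shift_aux (v : ℕ → ℝ) (hv : ∀ i, 0 ≤ v i) :
    (limsup (fun n => ENNReal.ofReal ((∑ i ∈ Finset.range n, v (i + 1)) / n)) atTop
      = limsup (fun n => ENNReal.ofReal ((∑ i ∈ Finset.range n, v i) / n)) atTop) ∧
    (liminf (fun n => ENNReal.ofReal ((∑ i ∈ Finset.range n, v (i + 1)) / n)) atTop
      = liminf (fun n => ENNReal.ofReal ((∑ i ∈ Finset.range n, v i) / n)) atTop) := by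
  set s : ℕ → ℝ := fun n => ∑ i ∈ Finset.range n, v i with hs_def
  have hs : ∀ n, 0 ≤ s n := fun n => Finset.sum_nonneg fun i _ => hv i
  set A : ℕ → ℝ≥0∞ := fun n => ENNReal.ofReal (s n / n) with hA_def
  set B : ℕ → ℝ≥0∞ := fun n => ENNReal.ofReal ((∑ i ∈ Finset.range n, v (i + 1)) / n)
    with hB_def
  set c : ℕ → ℝ≥0∞ := fun n => ENNReal.ofReal (((n : ℝ) + 1) / n) with hc_def
  set d : ℕ → ℝ≥0∞ := fun n => ENNReal.ofReal (v 0 / n) with hd_def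
  have key0 : ∀ n : ℕ, ∑ i ∈ Finset.range n, v (i + 1) = s (n + 1) - v 0 := by
    intro n
    have h := Finset.sum_range_succ' v n
    simp only [hs_def]
    linarith [h]
  have hBle : ∀ n : ℕ, 1 ≤ n → B n ≤ A (n + 1) * c n := by
    intro n hn
    have hn0 : (0:ℝ) < n := by exact_mod_cast hn
    simp only [hA_def, hB_def, hc_def]
    push_cast
    rw [← ENNReal.ofReal_mul (div_nonneg (hs _) (by positivity))]
    refine ENNReal.ofReal_le_ofReal ?_
    have h2 : s (n + 1) / ((n:ℝ) + 1) * (((n:ℝ) + 1) / n) = s (n + 1) / n := by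
      field_simp
    rw [h2, key0 n]
    exact (div_le_div_iff_of_pos_right hn0).mpr (by linarith [hv 0])
  have hAle : ∀ n : ℕ, 1 ≤ n → A (n + 1) ≤ B n + d n := by
    intro n hn
    have hn0 : (0:ℝ) < n := by exact_mod_cast hn
    simp only [hA_def, hB_def, hd_def]
    push_cast
    refine le_trans (ENNReal.ofReal_le_ofReal (?_ : s (n+1) / ((n:ℝ)+1) ≤ (∑ i ∈ Finset.range n, v (i + 1)) / n + v 0 / n)) ENNReal.ofReal_add_le
    have h1 : s (n + 1) / ((n:ℝ) + 1) ≤ s (n + 1) / n := by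
      gcongr
      · exact hs _
      · linarith
    have h2 : (∑ i ∈ Finset.range n, v (i + 1)) / (n:ℝ) + v 0 / n = s (n + 1) / n := by
      rw [key0 n]; field_simp; ring
    linarith
  have hcl : Tendsto c atTop (nhds 1) := by
    have h1 : Tendsto (fun n : ℕ => ((n : ℝ) + 1) / n) atTop (nhds 1) := by
      have h2 : Tendsto (fun n : ℕ => 1 + 1 / (n:ℝ)) atTop (nhds 1) := by
        have : Tendsto (fun n : ℕ => 1 / (n:ℝ)) atTop (nhds 0) := tendsto_one_div_atTop_nhds_zero_nat
        simpa using (tendsto_const_nhds (x := (1:ℝ)) (f := atTop)).add this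
      refine h2.congr' ?_
      filter_upwards [eventually_ge_atTop 1] with n hn
      have hn0 : (0:ℝ) < n := by exact_mod_cast hn
      field_simp
    simpa using ENNReal.tendsto_ofReal h1
  have hdl : Tendsto d atTop (nhds 0) := by
    have h1 : Tendsto (fun n : ℕ => v 0 / (n:ℝ)) atTop (nhds 0) :=
      tendsto_const_div_atTop_nhds_zero_nat (v 0)
    simpa using ENNReal.tendsto_ofReal h1
  have hclimsup : limsup c atTop = 1 := hcl.limsup_eq
  -- (1) limsup B ≤ limsup A
  have h1 : limsup B atTop ≤ limsup A atTop := by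
    have e1 : limsup B atTop ≤ limsup (fun n => A (n + 1) * c n) atTop := by
      refine limsup_le_limsup ?_
      filter_upwards [eventually_ge_atTop 1] with n hn using hBle n hn
    refine e1.trans ?_
    have e2 : limsup (fun n => A (n + 1) * c n) atTop
        ≤ limsup (fun n => A (n + 1)) atTop * limsup c atTop := by
      have hrw : (fun n => A (n + 1) * c n) = (fun n => A (n + 1)) * c := rfl
      rw [hrw]
      refine ENNReal.limsup_mul_le' (f := atTop) (u := fun n => A (n + 1)) (v := c)
        (Or.inr ?_) (Or.inr ?_) <;> rw [hclimsup]
      · exact one_ne_top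
      · exact one_ne_zero
    rw [hclimsup, mul_one] at e2
    exact e2.trans_eq (limsup_nat_add A 1)
  -- (2) limsup A ≤ limsup B
  have h2 : limsup A atTop ≤ limsup B atTop := by
    rw [← limsup_nat_add A 1]
    refine le_trans (limsup_le_limsup ?_) (limsup_add_small hdl)
    filter_upwards [eventually_ge_atTop 1] with n hn using hAle n hn
  -- (3) liminf B ≤ liminf A
  have h3 : liminf B atTop ≤ liminf A atTop := by
    have e1 : liminf B atTop ≤ liminf (fun n => c n * A (n + 1)) atTop := by
      refine liminf_le_liminf ?_
      filter_upwards [eventually_ge_atTop 1] with n hn using (hBle n hn).trans_eq (mul_comm _ _)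
    refine e1.trans ?_
    have e2 : liminf (fun n => c n * A (n + 1)) atTop
        ≤ limsup c atTop * liminf (fun n => A (n + 1)) atTop := by
      have hrw : (fun n => c n * A (n + 1)) = c * (fun n => A (n + 1)) := rfl
      rw [hrw]
      refine ENNReal.liminf_mul_le (f := atTop) (u := c) (v := fun n => A (n + 1))
        (Or.inl ?_) (Or.inl ?_) <;> rw [hclimsup]
      · exact one_ne_zero
      · exact one_ne_top
    rw [hclimsup, one_mul] at e2
    exact e2.trans_eq (liminf_nat_add A 1)
  -- (4) liminf A ≤ liminf B
  have h4 : liminf A atTop ≤ liminf B atTop := by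
    rw [← liminf_nat_add A 1]
    refine le_trans (liminf_le_liminf ?_) (liminf_add_small hdl)
    filter_upwards [eventually_ge_atTop 1] with n hn using hAle n hn
  exact ⟨le_antisymm h1 h2, le_antisymm h3 h4⟩


lemma ite_not_mem_eq_indicator {β : Type*} (s : Set β) (h : β → ℝ) (z : β)
    {inst : Decidable (z ∉ s)} :
    (@ite ℝ (z ∉ s) inst (h z) 0) = sᶜ.indicator h z := by
  by_cases hm : z ∈ s <;> simp [hm, Set.indicator_apply]

theorem birkhoff {α : Type*} [MeasurableSpace α] (μ : Measure α) [IsProbabilityMeasure μ]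
    {g : α → α} {f : α → ℝ} (herg : Ergodic g μ)
    (hf : Measurable f) (hf0 : ∀ x, 0 ≤ f x) (hfi : Integrable f μ) :
    ∀ᵐ x ∂μ, Tendsto (fun n => (∑ i ∈ Finset.range n, f (g^[i] x)) / n) atTop
      (nhds (∫ x, f x ∂μ)) := by
  have hmp : MeasurePreserving g μ μ := herg.toMeasurePreserving
  have hmpk : ∀ k : ℕ, MeasurePreserving g^[k] μ μ := fun k => hmp.iterate k
  set S : ℕ → α → ℝ := fun n x => ∑ i ∈ Finset.range n, f (g^[i] x) with hS_def
  have hSm : ∀ n, Measurable (S n) := fun n =>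
    Finset.measurable_sum _ fun i _ => hf.comp (hmp.measurable.iterate i)
  have hS0 : ∀ n x, 0 ≤ S n x := fun n x => Finset.sum_nonneg fun i _ => hf0 _
  set I : ℝ := ∫ x, f x ∂μ with hI_def
  have hI0 : 0 ≤ I := integral_nonneg hf0
  -- integral and integrability of compositions
  have hcomp_int : ∀ (h : α → ℝ), Measurable h → Integrable h μ → ∀ k,
      Integrable (fun x => h (g^[k] x)) μ := by
    intro h hh hhint k
    have := (integrable_map_measure (by rw [(hmpk k).map_eq]; exact hh.aestronglyMeasurable)
      (hmpk k).aemeasurable).mp (by rwa [(hmpk k).map_eq])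
    exact this
  have hcomp_integral : ∀ (h : α → ℝ), Measurable h → ∀ k : ℕ,
      ∫ x, h (g^[k] x) ∂μ = ∫ x, h x ∂μ := by
    intro h hh k
    conv_rhs => rw [← (hmpk k).map_eq]
    rw [integral_map (hmpk k).aemeasurable
      (by rw [(hmpk k).map_eq]; exact hh.aestronglyMeasurable)]
  set A : ℕ → α → ℝ≥0∞ := fun n x => ENNReal.ofReal (S n x / n) with hA_def
  have hAm : ∀ n, Measurable (A n) := fun n =>
    ENNReal.measurable_ofReal.comp ((hSm n).div_const _)
  set φfn : α → ℝ≥0∞ := fun x => limsup (fun n => A n x) atTop with hφ_def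
  set ψfn : α → ℝ≥0∞ := fun x => liminf (fun n => A n x) atTop with hψ_def
  have hφm : Measurable φfn := Measurable.limsup hAm
  have hψm : Measurable ψfn := Measurable.liminf hAm
  -- invariance
  have hSg : ∀ n x, S n (g x) = ∑ i ∈ Finset.range n, f (g^[i + 1] x) := by
    intro n x
    refine Finset.sum_congr rfl fun i _ => ?_
    rw [Function.iterate_succ_apply]
  have hφT : ∀ x, φfn (g x) = φfn x := by
    intro x
    have h := (shift_aux (fun i => f (g^[i] x)) (fun i => hf0 _)).1
    simp only [hφ_def, hA_def]
    simp_rw [hSg]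
    exact h
  have hψT : ∀ x, ψfn (g x) = ψfn x := by
    intro x
    have h := (shift_aux (fun i => f (g^[i] x)) (fun i => hf0 _)).2
    simp only [hψ_def, hA_def]
    simp_rw [hSg]
    exact h
  obtain ⟨af, haf⟩ := herg.ae_eq_const_of_ae_eq_comp₀ hφm.nullMeasurable
    (Filter.Eventually.of_forall fun x => hφT x)
  obtain ⟨bf, hbf⟩ := herg.ae_eq_const_of_ae_eq_comp₀ hψm.nullMeasurable
    (Filter.Eventually.of_forall fun x => hψT x)
  -- Goal 1 : af ≤ ofReal I
  have goal1 : af ≤ ENNReal.ofReal I := by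
    classical
    by_contra hlt
    push_neg at hlt
    obtain ⟨c, hc0, hcI, hcaf⟩ := ENNReal.lt_iff_exists_real_btwn.mp hlt
    have hIc : I < c := (ENNReal.ofReal_lt_ofReal_iff_of_nonneg hI0).mp hcI
    have hcpos : 0 < c := lt_of_le_of_lt hI0 hIc
    set E : ℕ → Set α := fun N => {x | ∃ m, 1 ≤ m ∧ m ≤ N ∧ c * m ≤ S m x} with hE_def
    have hEmeas : ∀ N, MeasurableSet (E N) := by
      intro N
      have : E N = ⋃ m, {x | 1 ≤ m ∧ m ≤ N ∧ c * m ≤ S m x} := by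
        ext x; simp [hE_def]
      rw [this]
      refine MeasurableSet.iUnion fun m => ?_
      by_cases hm : 1 ≤ m ∧ m ≤ N
      · have : {x | 1 ≤ m ∧ m ≤ N ∧ c * (m:ℝ) ≤ S m x} = {x | c * (m:ℝ) ≤ S m x} := by
          ext x; simp [hm.1, hm.2]
        rw [this]
        exact measurableSet_le measurable_const (hSm m)
      · have : {x | 1 ≤ m ∧ m ≤ N ∧ c * (m:ℝ) ≤ S m x} = ∅ := by
          ext x; simp only [mem_setOf_eq, mem_empty_iff_false, iff_false]
          intro h; exact hm ⟨h.1, h.2.1⟩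
        rw [this]; exact MeasurableSet.empty
    have hEmono : Monotone E := by
      intro N N' hNN' x hx
      obtain ⟨m, h1, h2, h3⟩ := hx
      exact ⟨m, h1, h2.trans hNN', h3⟩
    have hae_mem : ∀ᵐ x ∂μ, x ∈ ⋃ N, E N := by
      filter_upwards [haf] with x hx
      have hlt' : ENNReal.ofReal c < φfn x := by
        rw [hx]; simpa using hcaf
      have hfreq : ∃ᶠ n in atTop, ENNReal.ofReal c < A n x :=
        frequently_lt_of_lt_limsup (by isBoundedDefault) hlt'
      obtain ⟨n, hn1, hn⟩ := frequently_atTop.mp hfreq 1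
      have hn0 : (0:ℝ) < n := by exact_mod_cast hn1
      have hlt'' : c < S n x / n := by
        by_contra hle
        push_neg at hle
        exact absurd (ENNReal.ofReal_le_ofReal hle) (not_le.2 hn)
      have hcm : c * n ≤ S n x := ((lt_div_iff₀ hn0).mp hlt'').le
      exact mem_iUnion.2 ⟨n, n, hn1, le_refl n, hcm⟩
    have hU1 : μ (⋃ N, E N) = 1 := by
      have h0 : μ {x | ¬ x ∈ ⋃ N, E N} = 0 := ae_iff.mp hae_mem
      have hcompl : μ (⋃ N, E N)ᶜ = 0 := h0
      have hadd := measure_add_measure_compl (μ := μ) (MeasurableSet.iUnion hEmeas)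
      rw [hcompl, add_zero, measure_univ] at hadd
      exact hadd
    have htendE : Tendsto (fun N => μ (E N)) atTop (nhds 1) := by
      rw [← hU1]
      exact tendsto_measure_iUnion_atTop hEmono
    have htr : Tendsto (fun N => (μ (E N)).toReal) atTop (nhds 1) := by
      have := (ENNReal.tendsto_toReal one_ne_top).comp htendE
      exact this
    set δ : ℝ := (c - I) / (2 * c) with hδ_def
    have hδpos : 0 < δ := div_pos (by linarith) (by linarith)
    obtain ⟨N, hN⟩ := (htr.eventually (eventually_gt_nhds (by linarith : 1 - δ < 1))).exists
    set b : ℝ := (μ (E N)ᶜ).toReal with hb_def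
    have hbval : b = 1 - (μ (E N)).toReal := by
      rw [hb_def, measure_compl (hEmeas N) (measure_ne_top μ _), measure_univ,
        ENNReal.toReal_sub_of_le prob_le_one one_ne_top]
      simp
    have hb : b < δ := by rw [hbval]; linarith
    have hbnn : 0 ≤ b := ENNReal.toReal_nonneg
    -- pointwise covering bound
    have hpt : ∀ (x : α) (L : ℕ), c * ((L:ℝ) - N - ∑ k ∈ Finset.range L,
        ((E N)ᶜ).indicator (fun _ => (1:ℝ)) (g^[k] x)) ≤ S L x := by
      intro x L
      have h := cover_lower c hcpos.le N L (fun k => f (g^[k] x)) (fun k => hf0 _)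
        (fun k => g^[k] x ∉ E N) (Classical.decPred _) ?_
      · have he : ∀ k : ℕ, (fun _ => (1:ℝ)) (g^[k] x) = (1:ℝ) := fun k => rfl
        simp only [ite_not_mem_eq_indicator (E N) (fun _ => (1:ℝ)) _] at h
        exact h
      · intro k hk
        obtain ⟨m, h1, h2, h3⟩ := not_not.mp hk
        refine ⟨m, h1, h2, ?_⟩
        refine h3.trans_eq (Finset.sum_congr rfl fun i _ => ?_)
        rw [← Function.iterate_add_apply, Nat.add_comm]
    -- integrate
    have hind_meas : Measurable (((E N)ᶜ).indicator (fun _ => (1:ℝ))) :=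
      measurable_const.indicator (hEmeas N).compl
    have hind_int : Integrable (((E N)ᶜ).indicator (fun _ => (1:ℝ))) μ :=
      (integrable_const (1:ℝ)).indicator (hEmeas N).compl
    have hind_eq : ∀ k x, (if g^[k] x ∉ E N then (1:ℝ) else 0)
        = ((E N)ᶜ).indicator (fun _ => (1:ℝ)) (g^[k] x) := by
      intro k x
      by_cases h : g^[k] x ∈ E N <;> simp [Set.indicator_apply, h]
    have main : ∀ L : ℕ, c * ((L:ℝ) - N - L * b) ≤ L * I := by
      intro L
      have hSL_int : Integrable (S L) μ :=
        integrable_finset_sum _ fun i _ => hcomp_int f hf hfi i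
      have hsum_int : Integrable (fun x => ∑ k ∈ Finset.range L,
          ((E N)ᶜ).indicator (fun _ => (1:ℝ)) (g^[k] x)) μ :=
        integrable_finset_sum _ fun k _ => hcomp_int _ hind_meas hind_int k
      have hlhs_int : Integrable (fun x => c * (((L:ℝ) - N) - ∑ k ∈ Finset.range L,
          ((E N)ᶜ).indicator (fun _ => (1:ℝ)) (g^[k] x))) μ :=
        ((integrable_const ((L:ℝ) - N)).sub hsum_int).const_mul c
      have hmono := integral_mono hlhs_int hSL_int (fun x => hpt x L)
      -- compute both integrals
      have hrhs : ∫ x, S L x ∂μ = L * I := by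
        rw [hS_def]
        rw [integral_finset_sum _ (fun i _ => hcomp_int f hf hfi i)]
        have : ∀ i ∈ Finset.range L, ∫ x, f (g^[i] x) ∂μ = I :=
          fun i _ => hcomp_integral f hf i
        rw [Finset.sum_congr rfl this, Finset.sum_const, Finset.card_range, nsmul_eq_mul]
      have hindk : ∀ k : ℕ, ∫ x, ((E N)ᶜ).indicator (fun _ => (1:ℝ)) (g^[k] x) ∂μ = b := by
        intro k
        rw [hcomp_integral _ hind_meas k, hb_def]
        have : (((E N)ᶜ).indicator (fun _ => (1:ℝ))) = (((E N)ᶜ).indicator (1 : α → ℝ)) := rfl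
        rw [this, integral_indicator_one (hEmeas N).compl, measureReal_def]
      have hlhs : ∫ x, c * (((L:ℝ) - N) - ∑ k ∈ Finset.range L,
          ((E N)ᶜ).indicator (fun _ => (1:ℝ)) (g^[k] x)) ∂μ = c * ((L:ℝ) - N - L * b) := by
        rw [integral_const_mul, integral_sub (integrable_const _) hsum_int,
          integral_const, integral_finset_sum _ (fun k _ => hcomp_int _ hind_meas hind_int k),
          Finset.sum_congr rfl (fun k _ => hindk k), Finset.sum_const, Finset.card_range,
          nsmul_eq_mul]
        simp [measure_univ]
      rw [hlhs, hrhs] at hmono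
      exact hmono
    have hdiv : ∀ L : ℕ, 1 ≤ L → c * (1 - (N:ℝ)/L - b) ≤ I := by
      intro L hL
      have hL0 : (0:ℝ) < L := by exact_mod_cast hL
      have h := main L
      have heq : c * ((L:ℝ) - N - L * b) = L * (c * (1 - (N:ℝ)/L - b)) := by
        field_simp
      rw [heq] at h
      exact (mul_le_mul_iff_right₀ hL0).mp h
    have hlim : Tendsto (fun L : ℕ => c * (1 - (N:ℝ)/L - b)) atTop
        (nhds (c * (1 - 0 - b))) :=
      ((tendsto_const_nhds.sub (tendsto_const_div_atTop_nhds_zero_nat (N:ℝ))).sub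
        tendsto_const_nhds).const_mul c
    have hfinal : c * (1 - 0 - b) ≤ I :=
      le_of_tendsto hlim (eventually_atTop.2 ⟨1, hdiv⟩)
    have h1 : c * b < (c - I) / 2 := by
      have h2 : c * δ = (c - I) / 2 := by rw [hδ_def]; field_simp
      calc c * b < c * δ := mul_lt_mul_of_pos_left hb hcpos
      _ = (c - I)/2 := h2
    nlinarith [hfinal, h1]
  -- Goal 2 : ofReal I ≤ bf
  have goal2 : ENNReal.ofReal I ≤ bf := by
    classical
    by_contra hlt
    push_neg at hlt
    obtain ⟨c, hc0, hbfc, hcI⟩ := ENNReal.lt_iff_exists_real_btwn.mp hlt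
    have hcI' : c < I := (ENNReal.ofReal_lt_ofReal_iff_of_nonneg hc0).mp hcI
    set E : ℕ → Set α := fun N => {x | ∃ m, 1 ≤ m ∧ m ≤ N ∧ S m x ≤ c * m} with hE_def
    have hEmeas : ∀ N, MeasurableSet (E N) := by
      intro N
      have : E N = ⋃ m, {x | 1 ≤ m ∧ m ≤ N ∧ S m x ≤ c * m} := by
        ext x; simp [hE_def]
      rw [this]
      refine MeasurableSet.iUnion fun m => ?_
      by_cases hm : 1 ≤ m ∧ m ≤ N
      · have : {x | 1 ≤ m ∧ m ≤ N ∧ S m x ≤ c * (m:ℝ)} = {x | S m x ≤ c * (m:ℝ)} := by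
          ext x; simp [hm.1, hm.2]
        rw [this]
        exact measurableSet_le (hSm m) measurable_const
      · have : {x | 1 ≤ m ∧ m ≤ N ∧ S m x ≤ c * (m:ℝ)} = ∅ := by
          ext x; simp only [mem_setOf_eq, mem_empty_iff_false, iff_false]
          intro h; exact hm ⟨h.1, h.2.1⟩
        rw [this]; exact MeasurableSet.empty
    have hEmono : Monotone E := by
      intro N N' hNN' x hx
      obtain ⟨m, h1, h2, h3⟩ := hx
      exact ⟨m, h1, h2.trans hNN', h3⟩
    have hae_mem : ∀ᵐ x ∂μ, x ∈ ⋃ N, E N := by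
      filter_upwards [hbf] with x hx
      have hlt' : ψfn x < ENNReal.ofReal c := by
        rw [hx]; simpa using hbfc
      have hfreq : ∃ᶠ n in atTop, A n x < ENNReal.ofReal c :=
        frequently_lt_of_liminf_lt (by isBoundedDefault) hlt'
      obtain ⟨n, hn1, hn⟩ := frequently_atTop.mp hfreq 1
      have hn0 : (0:ℝ) < n := by exact_mod_cast hn1
      have hlt'' : S n x / n < c :=
        (ENNReal.ofReal_lt_ofReal_iff_of_nonneg (div_nonneg (hS0 n x) (Nat.cast_nonneg n))).mp hn
      have hcm : S n x ≤ c * n := ((div_lt_iff₀ hn0).mp hlt'').le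
      exact mem_iUnion.2 ⟨n, n, hn1, le_refl n, hcm⟩
    set J : ℕ → ℝ := fun N => ∫ x, ((E N)ᶜ).indicator f x ∂μ with hJ_def
    have hJtend : Tendsto J atTop (nhds 0) := by
      have h0 : (0:ℝ) = ∫ _x, (0:ℝ) ∂μ := by simp
      rw [h0]
      refine tendsto_integral_of_dominated_convergence f
        (fun N => (hf.indicator (hEmeas N).compl).aestronglyMeasurable) hfi ?_ ?_
      · intro N
        refine Filter.Eventually.of_forall fun x => ?_
        by_cases h : x ∈ (E N)ᶜ
        · simp [Set.indicator_of_mem h, Real.norm_eq_abs, abs_of_nonneg (hf0 x)]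
        · simp [Set.indicator_of_notMem h, Real.norm_eq_abs, hf0 x]
      · filter_upwards [hae_mem] with x hx
        obtain ⟨N₀, hN₀⟩ := mem_iUnion.mp hx
        refine tendsto_const_nhds.congr' ?_
        filter_upwards [eventually_ge_atTop N₀] with N hN
        have hmem : x ∈ E N := hEmono hN hN₀
        have : x ∉ (E N)ᶜ := fun h => h hmem
        rw [Set.indicator_of_notMem this]
    have hhalf : 0 < (I - c)/2 := by linarith
    obtain ⟨N, hN⟩ := (hJtend.eventually (gt_mem_nhds hhalf)).exists
    have hJN0 : 0 ≤ J N :=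
      integral_nonneg fun x => Set.indicator_nonneg (fun a _ => hf0 a) x
    -- pointwise covering bound
    have hpt : ∀ (x : α) (L : ℕ), S L x ≤ c * ((L:ℝ) + N)
        + (∑ k ∈ Finset.range L, ((E N)ᶜ).indicator f (g^[k] x))
        + ∑ i ∈ Finset.range N, f (g^[L + i] x) := by
      intro x L
      have h := cover_upper c hc0 N L (fun k => f (g^[k] x)) (fun k => hf0 _)
        (fun k => g^[k] x ∉ E N) (Classical.decPred _) ?_
      · simp only [ite_not_mem_eq_indicator (E N) f _] at h
        exact h
      · intro k hk
        obtain ⟨m, h1, h2, h3⟩ := not_not.mp hk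
        refine ⟨m, h1, h2, le_trans (le_of_eq ?_) h3⟩
        refine Finset.sum_congr rfl fun i _ => ?_
        rw [← Function.iterate_add_apply, Nat.add_comm]
    -- integrate
    have hBind_meas : Measurable (((E N)ᶜ).indicator f) := hf.indicator (hEmeas N).compl
    have hBind_int : Integrable (((E N)ᶜ).indicator f) μ := hfi.indicator (hEmeas N).compl
    have main : ∀ L : ℕ, (L:ℝ) * I ≤ c * ((L:ℝ) + N) + L * J N + N * I := by
      intro L
      have hSL_int : Integrable (S L) μ :=
        integrable_finset_sum _ fun i _ => hcomp_int f hf hfi i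
      have hsum_int : Integrable (fun x => ∑ k ∈ Finset.range L,
          ((E N)ᶜ).indicator f (g^[k] x)) μ :=
        integrable_finset_sum _ fun k _ => hcomp_int _ hBind_meas hBind_int k
      have htail_int : Integrable (fun x => ∑ i ∈ Finset.range N, f (g^[L + i] x)) μ :=
        integrable_finset_sum _ fun i _ => hcomp_int f hf hfi _
      have hconst_int : Integrable (fun _x : α => c * ((L:ℝ) + N)) μ := integrable_const _
      have hA1 : Integrable (fun x => c * ((L:ℝ) + N)
          + ∑ k ∈ Finset.range L, ((E N)ᶜ).indicator f (g^[k] x)) μ :=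
        hconst_int.add hsum_int
      have hA2 : Integrable (fun x => (c * ((L:ℝ) + N)
          + ∑ k ∈ Finset.range L, ((E N)ᶜ).indicator f (g^[k] x))
          + ∑ i ∈ Finset.range N, f (g^[L + i] x)) μ := hA1.add htail_int
      have hmono := integral_mono hSL_int hA2 (fun x => hpt x L)
      have hlhs : ∫ x, S L x ∂μ = L * I := by
        rw [hS_def]
        rw [integral_finset_sum _ (fun i _ => hcomp_int f hf hfi i)]
        rw [Finset.sum_congr rfl (fun i (_ : i ∈ Finset.range L) => hcomp_integral f hf i),
          Finset.sum_const, Finset.card_range, nsmul_eq_mul]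
      have hrhs : ∫ x, (c * ((L:ℝ) + N)
          + (∑ k ∈ Finset.range L, ((E N)ᶜ).indicator f (g^[k] x))
          + ∑ i ∈ Finset.range N, f (g^[L + i] x)) ∂μ
          = c * ((L:ℝ) + N) + L * J N + N * I := by
        rw [integral_add hA1 htail_int, integral_add hconst_int hsum_int, integral_const]
        rw [integral_finset_sum _ (fun k _ => hcomp_int _ hBind_meas hBind_int k),
          Finset.sum_congr rfl (fun k (_ : k ∈ Finset.range L) =>
            hcomp_integral _ hBind_meas k),
          Finset.sum_const, Finset.card_range, nsmul_eq_mul]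
        rw [integral_finset_sum _ (fun i _ => hcomp_int f hf hfi _),
          Finset.sum_congr rfl (fun i (_ : i ∈ Finset.range N) => hcomp_integral f hf _),
          Finset.sum_const, Finset.card_range, nsmul_eq_mul]
        simp [measure_univ]
        rfl
      rw [hlhs, hrhs] at hmono
      exact hmono
    have hdiv : ∀ L : ℕ, 1 ≤ L → I ≤ c * (1 + (N:ℝ)/L) + J N + N * I / L := by
      intro L hL
      have hL0 : (0:ℝ) < L := by exact_mod_cast hL
      have h := main L
      have heq : (L:ℝ) * (c * (1 + (N:ℝ)/L) + J N + N * I / L)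
          = c * ((L:ℝ) + N) + L * J N + N * I := by
        field_simp
      refine (mul_le_mul_iff_right₀ hL0).mp ?_
      rw [heq]
      exact h
    have hlim : Tendsto (fun L : ℕ => c * (1 + (N:ℝ)/L) + J N + N * I / L) atTop
        (nhds (c * (1 + 0) + J N + 0)) := by
      have h1 : Tendsto (fun L : ℕ => (N:ℝ)/L) atTop (nhds 0) :=
        tendsto_const_div_atTop_nhds_zero_nat (N:ℝ)
      have h2 : Tendsto (fun L : ℕ => (N:ℝ) * I / L) atTop (nhds 0) :=
        tendsto_const_div_atTop_nhds_zero_nat ((N:ℝ) * I)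
      exact (((tendsto_const_nhds.add h1).const_mul c).add tendsto_const_nhds).add h2
    have hfin : I ≤ c * (1 + 0) + J N + 0 :=
      ge_of_tendsto hlim (eventually_atTop.2 ⟨1, hdiv⟩)
    have : I ≤ c + J N := by linarith
    linarith [hN]
  -- combine
  have hba : bf ≤ af := by
    obtain ⟨x₀, h1, h2⟩ := (haf.and hbf).exists
    calc bf = ψfn x₀ := h2.symm
    _ ≤ φfn x₀ := liminf_le_limsup
    _ = af := h1
  have hafI : af = ENNReal.ofReal I := le_antisymm goal1 (goal2.trans hba)
  have hbfI : bf = ENNReal.ofReal I := le_antisymm (hba.trans goal1) goal2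
  filter_upwards [haf, hbf] with x h1 h2
  have htend : Tendsto (fun n => A n x) atTop (nhds (ENNReal.ofReal I)) := by
    refine tendsto_of_liminf_eq_limsup ?_ ?_
    · exact h2.trans hbfI
    · exact h1.trans hafI
  have htoReal := (ENNReal.tendsto_toReal (ENNReal.ofReal_ne_top)).comp htend
  rw [ENNReal.toReal_ofReal hI0] at htoReal
  refine htoReal.congr fun n => ?_
  simp only [Function.comp_apply, hA_def, ENNReal.toReal_ofReal
    (div_nonneg (hS0 n x) (Nat.cast_nonneg n))]
  rfl


lemma abs_toReal_sub_le_symmDiff {α : Type*} [MeasurableSpace α] (μ : Measure α)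
    [IsFiniteMeasure μ] (U V : Set α) :
    |(μ U).toReal - (μ V).toReal| ≤ (μ (symmDiff U V)).toReal := by
  have hsub1 : U ⊆ V ∪ symmDiff U V := by
    intro x hx
    by_cases h : x ∈ V
    · exact Or.inl h
    · exact Or.inr (by simp [Set.mem_symmDiff, hx, h])
  have hsub2 : V ⊆ U ∪ symmDiff U V := by
    intro x hx
    by_cases h : x ∈ U
    · exact Or.inl h
    · exact Or.inr (by simp [Set.mem_symmDiff, hx, h])
  have h1 : (μ U).toReal ≤ (μ V).toReal + (μ (symmDiff U V)).toReal := by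
    have h : μ U ≤ μ V + μ (symmDiff U V) :=
      (measure_mono hsub1).trans (measure_union_le _ _)
    have h2 : (μ U).toReal ≤ (μ V + μ (symmDiff U V)).toReal :=
      ENNReal.toReal_mono (b := μ V + μ (symmDiff U V))
        (ENNReal.add_ne_top.2 ⟨measure_ne_top μ _, measure_ne_top μ _⟩) h
    rwa [ENNReal.toReal_add (measure_ne_top μ _) (measure_ne_top μ _)] at h2
  have h2 : (μ V).toReal ≤ (μ U).toReal + (μ (symmDiff U V)).toReal := by
    have h : μ V ≤ μ U + μ (symmDiff U V) :=
      (measure_mono hsub2).trans (measure_union_le _ _)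
    have h2 : (μ V).toReal ≤ (μ U + μ (symmDiff U V)).toReal :=
      ENNReal.toReal_mono (b := μ U + μ (symmDiff U V))
        (ENNReal.add_ne_top.2 ⟨measure_ne_top μ _, measure_ne_top μ _⟩) h
    rwa [ENNReal.toReal_add (measure_ne_top μ _) (measure_ne_top μ _)] at h2
  rw [abs_sub_le_iff]
  constructor <;> linarith

lemma symmDiff_inter_subset {α : Type*} (U₁ U₂ V₁ V₂ : Set α) :
    symmDiff (U₁ ∩ U₂) (V₁ ∩ V₂) ⊆ symmDiff U₁ V₁ ∪ symmDiff U₂ V₂ := by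
  intro x hx
  simp only [Set.mem_symmDiff, Set.mem_union, Set.mem_inter_iff] at hx ⊢
  tauto


end Stmt3Aux

open Stmt3Aux in
theorem stmt3 {Ω : Type*} [MeasureSpace Ω] [IsProbabilityMeasure (ℙ : Measure Ω)]
    (X : ℕ → Ω → ℝ)
    (hmeas : ∀ i, Measurable (X i))
    (hnonneg : ∀ i, ∀ᵐ ω ∂ℙ, 0 ≤ X i ω)
    (hint : ∀ i, Integrable (X i) ℙ)
    (hstat : ∀ i j : ℕ,
      Measure.map (fun ω (l : Fin (j + 1)) => X (i + l) ω) ℙ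
        = Measure.map (fun ω (l : Fin (j + 1)) => X l ω) ℙ)
    (hmix : ∀ (n m : ℕ) (f : (Fin (n + 1) → ℝ) → ℝ) (g : (Fin (m + 1) → ℝ) → ℝ),
      Measurable f → Measurable g →
      (∃ Cf, ∀ x, |f x| ≤ Cf) → (∃ Cg, ∀ x, |g x| ≤ Cg) →
      Tendsto
        (fun k => ∫ ω, f (fun l => X l ω) * g (fun l => X (k + l) ω) ∂ℙ)
        atTop
        (nhds ((∫ ω, f (fun l => X l ω) ∂ℙ) * ∫ ω, g (fun l => X l ω) ∂ℙ))) :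
    ∀ᵐ ω ∂ℙ, Tendsto
      (fun n => (∑ i ∈ Finset.range n, X i ω) / n) atTop (nhds (∫ ω, X 0 ω ∂ℙ)) := by
  classical
  set Φ : Ω → (ℕ → ℝ) := fun ω n => X n ω with hΦ_def
  have hΦm : Measurable Φ := measurable_pi_lambda _ fun n => hmeas n
  set μ : Measure (ℕ → ℝ) := Measure.map Φ ℙ with hμ_def
  haveI : IsProbabilityMeasure μ := Measure.isProbabilityMeasure_map hΦm.aemeasurable
  set T : (ℕ → ℝ) → (ℕ → ℝ) := fun y n => y (n + 1) with hT_def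
  have hTm : Measurable T := measurable_pi_lambda _ fun n => measurable_pi_apply (n + 1)
  have hTk : ∀ (k : ℕ) (y : ℕ → ℝ) (n : ℕ), T^[k] y n = y (n + k) := by
    intro k
    induction k with
    | zero => intro y n; simp
    | succ k ih =>
      intro y n
      rw [Function.iterate_succ_apply, ih (T y) n]
      simp only [hT_def]
      ring_nf
  set proj : ∀ j : ℕ, (ℕ → ℝ) → (Fin (j + 1) → ℝ) := fun j y l => y l with hproj_def
  have hprojm : ∀ j, Measurable (proj j) :=
    fun j => measurable_pi_lambda _ fun l => measurable_pi_apply _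
  set 𝒜 : Set (Set (ℕ → ℝ)) := {A | ∃ j S, MeasurableSet S ∧ A = proj j ⁻¹' S} with h𝒜_def
  have h𝒜meas : ∀ A ∈ 𝒜, MeasurableSet A := by
    rintro A ⟨j, S, hS, rfl⟩
    exact hprojm j hS
  have hmono_rep : ∀ (j k : ℕ) (h : j ≤ k) (S : Set (Fin (j + 1) → ℝ)),
      proj j ⁻¹' S = proj k ⁻¹'
        ((fun (v : Fin (k + 1) → ℝ) (l : Fin (j + 1)) => v (Fin.castLE (by omega) l)) ⁻¹' S) := by
    intro j k h S
    ext y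
    simp [hproj_def, Fin.coe_castLE]
  have halg : IsSetAlgebra 𝒜 := by
    refine ⟨⟨0, ∅, MeasurableSet.empty, by simp⟩, ?_, ?_⟩
    · rintro A ⟨j, S, hS, rfl⟩
      exact ⟨j, Sᶜ, hS.compl, by rw [Set.preimage_compl]⟩
    · rintro A B ⟨j, S, hS, rfl⟩ ⟨j', S', hS', rfl⟩
      rw [hmono_rep j (max j j') (le_max_left _ _) S,
        hmono_rep j' (max j j') (le_max_right _ _) S', ← Set.preimage_union]
      exact ⟨max j j', _, MeasurableSet.union
        ((measurable_pi_lambda _ fun l => measurable_pi_apply _) hS)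
        ((measurable_pi_lambda _ fun l => measurable_pi_apply _) hS'), rfl⟩
  have hπ : IsPiSystem 𝒜 := fun A hA B hB _ => halg.inter_mem hA hB
  have hcyl_sub : MeasureTheory.measurableCylinders (fun _ : ℕ => ℝ) ⊆ 𝒜 := by
    intro t ht
    obtain ⟨s, S, hS, rfl⟩ := (mem_measurableCylinders t).mp ht
    refine ⟨s.sup id, (fun (v : Fin (s.sup id + 1) → ℝ) (i : s) =>
      v ⟨i.1, Nat.lt_succ_of_le (Finset.le_sup (f := id) i.2)⟩) ⁻¹' S,
      (measurable_pi_lambda _ fun i => measurable_pi_apply _) hS, ?_⟩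
    ext y
    simp only [MeasureTheory.mem_cylinder, Set.mem_preimage]
    exact Iff.rfl
  have hgen : (inferInstance : MeasurableSpace (ℕ → ℝ)) = MeasurableSpace.generateFrom 𝒜 := by
    refine le_antisymm ?_ (MeasurableSpace.generateFrom_le h𝒜meas)
    have h1 := MeasureTheory.generateFrom_measurableCylinders (α := fun _ : ℕ => ℝ)
    calc (inferInstance : MeasurableSpace (ℕ → ℝ))
        = MeasurableSpace.generateFrom (MeasureTheory.measurableCylinders (fun _ : ℕ => ℝ)) :=
          h1.symm
    _ ≤ MeasurableSpace.generateFrom 𝒜 := MeasurableSpace.generateFrom_mono hcyl_sub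
  -- computation of cylinder measures
  have hproj_comp : ∀ (j k : ℕ) (ω : Ω),
      proj j (T^[k] (Φ ω)) = fun l : Fin (j + 1) => X (k + l) ω := by
    intro j k ω
    funext l
    simp only [hproj_def, hTk, hΦ_def]
    rw [Nat.add_comm]
  have hXmeasj : ∀ j k : ℕ, Measurable (fun ω (l : Fin (j + 1)) => X (k + l) ω) :=
    fun j k => measurable_pi_lambda _ fun l => hmeas _
  have hpre : ∀ (j k : ℕ) (S : Set (Fin (j + 1) → ℝ)),
      Φ ⁻¹' (T^[k] ⁻¹' (proj j ⁻¹' S)) = (fun ω (l : Fin (j + 1)) => X (k + l) ω) ⁻¹' S := by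
    intro j k S
    ext ω
    simp only [Set.mem_preimage]
    rw [show proj j (T^[k] (Φ ω)) = fun l : Fin (j + 1) => X (k + l) ω from hproj_comp j k ω]
  have hcylmeas : ∀ (k j : ℕ) (S : Set (Fin (j + 1) → ℝ)), MeasurableSet S →
      μ (T^[k] ⁻¹' (proj j ⁻¹' S)) = ℙ ((fun ω (l : Fin (j + 1)) => X (k + l) ω) ⁻¹' S) := by
    intro k j S hS
    rw [hμ_def, Measure.map_apply hΦm ((hTm.iterate k) (hprojm j hS)), hpre j k S]
  have hcyl_inv : ∀ (k j : ℕ) (S : Set (Fin (j + 1) → ℝ)), MeasurableSet S →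
      μ (T^[k] ⁻¹' (proj j ⁻¹' S)) = μ (proj j ⁻¹' S) := by
    intro k j S hS
    have h0 : μ (proj j ⁻¹' S) = ℙ ((fun ω (l : Fin (j + 1)) => X l ω) ⁻¹' S) := by
      have := hcylmeas 0 j S hS
      simp only [Function.iterate_zero, Set.preimage_id, id_eq, Nat.zero_add] at this
      exact this
    rw [hcylmeas k j S hS, h0,
      ← Measure.map_apply (hXmeasj j k) hS, hstat k j,
      Measure.map_apply (measurable_pi_lambda _ fun l => hmeas _) hS]
  have hTpres : MeasurePreserving T μ μ := by
    refine ⟨hTm, ?_⟩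
    haveI : IsProbabilityMeasure (Measure.map T μ) := Measure.isProbabilityMeasure_map hTm.aemeasurable
    refine ext_of_generate_finite 𝒜 hgen hπ ?_ (by simp)
    rintro A ⟨j, S, hS, rfl⟩
    rw [Measure.map_apply hTm (hprojm j hS)]
    have : T ⁻¹' (proj j ⁻¹' S) = T^[1] ⁻¹' (proj j ⁻¹' S) := by
      rw [Function.iterate_one]
    rw [this, hcyl_inv 1 j S hS]
  -- mixing for cylinder sets
  have hmixA : ∀ (j : ℕ) (S : Set (Fin (j + 1) → ℝ)), MeasurableSet S →
      Tendsto (fun k => (μ ((proj j ⁻¹' S) ∩ T^[k] ⁻¹' (proj j ⁻¹' S))).toReal) atTop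
        (nhds ((μ (proj j ⁻¹' S)).toReal * (μ (proj j ⁻¹' S)).toReal)) := by
    intro j S hS
    have hbd : ∀ x : Fin (j + 1) → ℝ, |S.indicator (fun _ => (1:ℝ)) x| ≤ 1 := by
      intro x
      by_cases h : x ∈ S <;> simp [Set.indicator_apply, h]
    have hmix' := hmix j j (S.indicator fun _ => 1) (S.indicator fun _ => 1)
      (measurable_const.indicator hS) (measurable_const.indicator hS) ⟨1, hbd⟩ ⟨1, hbd⟩
    have hint1 : ∫ ω, S.indicator (fun _ => (1:ℝ)) (fun l => X l ω) ∂ℙ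
        = (μ (proj j ⁻¹' S)).toReal := by
      have h0 : μ (proj j ⁻¹' S) = ℙ ((fun ω (l : Fin (j + 1)) => X l ω) ⁻¹' S) := by
        have := hcylmeas 0 j S hS
        simp only [Function.iterate_zero, Set.preimage_id, id_eq, Nat.zero_add] at this
        exact this
      rw [h0]
      have : ∀ ω, S.indicator (fun _ => (1:ℝ)) (fun l => X l ω)
          = ((fun ω (l : Fin (j + 1)) => X l ω) ⁻¹' S).indicator (fun _ => (1:ℝ)) ω := by
        intro ω
        by_cases h : (fun l : Fin (j + 1) => X l ω) ∈ S <;>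
          simp [Set.indicator_apply, h, Set.mem_preimage]
      rw [integral_congr_ae (Filter.Eventually.of_forall this)]
      have hone : (((fun ω (l : Fin (j + 1)) => X l ω) ⁻¹' S).indicator (fun _ => (1:ℝ)))
          = (((fun ω (l : Fin (j + 1)) => X l ω) ⁻¹' S).indicator (1 : Ω → ℝ)) := rfl
      rw [hone]
      exact integral_indicator_one ((measurable_pi_lambda _ fun l => hmeas _) hS)
    have hintk : ∀ k : ℕ, ∫ ω, S.indicator (fun _ => (1:ℝ)) (fun l => X l ω)
        * S.indicator (fun _ => (1:ℝ)) (fun l => X (k + l) ω) ∂ℙ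
        = (μ ((proj j ⁻¹' S) ∩ T^[k] ⁻¹' (proj j ⁻¹' S))).toReal := by
      intro k
      set G : Set Ω := ((fun ω (l : Fin (j + 1)) => X l ω) ⁻¹' S)
        ∩ ((fun ω (l : Fin (j + 1)) => X (k + l) ω) ⁻¹' S) with hG_def
      have hGmeas : MeasurableSet G :=
        ((measurable_pi_lambda _ fun l => hmeas _) hS).inter ((hXmeasj j k) hS)
      have h1 : ∀ ω, S.indicator (fun _ => (1:ℝ)) (fun l => X l ω)
          * S.indicator (fun _ => (1:ℝ)) (fun l => X (k + l) ω)
          = G.indicator (fun _ => (1:ℝ)) ω := by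
        intro ω
        by_cases h1 : (fun l : Fin (j + 1) => X l ω) ∈ S <;>
          by_cases h2 : (fun l : Fin (j + 1) => X (k + l) ω) ∈ S <;>
          simp [Set.indicator_apply, h1, h2, hG_def, Set.mem_preimage]
      rw [integral_congr_ae (Filter.Eventually.of_forall h1)]
      have hone : G.indicator (fun _ => (1:ℝ)) = G.indicator (1 : Ω → ℝ) := rfl
      rw [hone, integral_indicator_one hGmeas, measureReal_def]
      congr 1
      rw [hμ_def, Measure.map_apply hΦm ((hprojm j hS).inter ((hTm.iterate k) (hprojm j hS)))]
      rw [Set.preimage_inter, hpre j k S]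
      have h0 : Φ ⁻¹' (proj j ⁻¹' S) = (fun ω (l : Fin (j+1)) => X l ω) ⁻¹' S := by
        have := hpre j 0 S
        simpa using this
      rw [h0]
    refine Tendsto.congr (fun k => hintk k) ?_
    rw [← hint1]
    exact hmix'
  -- ergodicity
  have herg : Ergodic T μ := by
    refine ⟨hTpres, ⟨?_⟩⟩
    intro s hs hinv
    have hinvk : ∀ k : ℕ, T^[k] ⁻¹' s = s := by
      intro k
      induction k with
      | zero => simp
      | succ k ih => rw [Function.iterate_succ, Set.preimage_comp, ih, hinv]
    set p : ℝ := (μ s).toReal with hp_def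
    have hp0 : 0 ≤ p := ENNReal.toReal_nonneg
    have hp1 : p ≤ 1 := by
      rw [hp_def]
      calc (μ s).toReal ≤ (μ Set.univ).toReal :=
        ENNReal.toReal_mono (by finiteness) (measure_mono (Set.subset_univ s))
      _ = 1 := by simp
    have hdense := Measure.MeasureDense.of_generateFrom_isSetAlgebra_finite
      (μ := μ) halg hgen
    have key : ∀ ε : ℝ, 0 < ε → |p - p * p| ≤ 4 * ε := by
      intro ε hε
      obtain ⟨A, hA𝒜, hAapprox'⟩ := hdense.approx s hs (measure_ne_top μ s) ε hε
      have hAapprox : (μ (s ∆ A)).toReal < ε :=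
        (ENNReal.lt_ofReal_iff_toReal_lt (measure_ne_top μ _)).mp hAapprox'
      have hAmeas : MeasurableSet A := h𝒜meas A hA𝒜
      obtain ⟨j, S, hS, rfl⟩ := hA𝒜
      set A := proj j ⁻¹' S with hA_def
      set q : ℝ := (μ A).toReal with hq_def
      have hq0 : 0 ≤ q := ENNReal.toReal_nonneg
      have hq1 : q ≤ 1 := by
        rw [hq_def]
        calc (μ A).toReal ≤ (μ Set.univ).toReal :=
          ENNReal.toReal_mono (by finiteness) (measure_mono (Set.subset_univ A))
        _ = 1 := by simp
      have h1 : ∀ k : ℕ, |p - (μ (A ∩ T^[k] ⁻¹' A)).toReal| ≤ 2 * ε := by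
        intro k
        have e1 : p = (μ (s ∩ T^[k] ⁻¹' s)).toReal := by rw [hinvk k, Set.inter_self]
        rw [e1]
        have habs := abs_toReal_sub_le_symmDiff μ (s ∩ T^[k] ⁻¹' s) (A ∩ T^[k] ⁻¹' A)
        refine habs.trans ?_
        have hsub := symmDiff_inter_subset s (T^[k] ⁻¹' s) A (T^[k] ⁻¹' A)
        have hTsym : (T^[k] ⁻¹' s) ∆ (T^[k] ⁻¹' A) = T^[k] ⁻¹' (s ∆ A) := by
          simp [Set.preimage_symmDiff]
        have hmeasTsym : μ (T^[k] ⁻¹' (s ∆ A)) = μ (s ∆ A) :=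
          (hTpres.iterate k).measure_preimage (hs.symmDiff hAmeas).nullMeasurableSet
        have h2 : μ ((s ∩ T^[k] ⁻¹' s) ∆ (A ∩ T^[k] ⁻¹' A)) ≤ μ (s ∆ A) + μ (s ∆ A) := by
          refine (measure_mono hsub).trans ?_
          refine (measure_union_le _ _).trans ?_
          rw [hTsym, hmeasTsym]
        have h3 : (μ ((s ∩ T^[k] ⁻¹' s) ∆ (A ∩ T^[k] ⁻¹' A))).toReal
            ≤ (μ (s ∆ A) + μ (s ∆ A)).toReal := ENNReal.toReal_mono (by finiteness) h2
        rw [ENNReal.toReal_add (measure_ne_top μ _) (measure_ne_top μ _)] at h3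
        linarith [hAapprox, h3]
      have h2 : Tendsto (fun k => |p - (μ (A ∩ T^[k] ⁻¹' A)).toReal|) atTop
          (nhds (|p - q * q|)) := by
        exact ((tendsto_const_nhds.sub (hmixA j S hS)).abs)
      have h3 : |p - q * q| ≤ 2 * ε := le_of_tendsto h2 (Filter.Eventually.of_forall h1)
      have h4 : |p - q| ≤ ε :=
        (abs_toReal_sub_le_symmDiff μ s A).trans hAapprox.le
      have h5 : |q * q - p * p| ≤ 2 * ε := by
        rw [show q * q - p * p = (q - p) * (q + p) by ring, abs_mul]
        have hqp : |q + p| ≤ 2 := abs_le.2 ⟨by linarith, by linarith⟩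
        have h4' : |q - p| ≤ ε := by rwa [abs_sub_comm] at h4
        calc |q - p| * |q + p| ≤ ε * 2 :=
          mul_le_mul h4' hqp (abs_nonneg _) hε.le
        _ = 2 * ε := by ring
      calc |p - p * p| ≤ |p - q * q| + |q * q - p * p| := abs_sub_le _ _ _
      _ ≤ 4 * ε := by linarith
    have hzero : p - p * p = 0 := by
      by_contra hne
      have hd : 0 < |p - p * p| := abs_pos.2 hne
      have := key (|p - p * p| / 8) (by linarith)
      linarith
    have : p = 0 ∨ p = 1 := by
      rcases mul_eq_zero.mp (show p * (1 - p) = 0 by linarith) with h | h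
      · exact Or.inl h
      · exact Or.inr (by linarith)
    rcases this with h | h
    · have hμ0 : μ s = 0 := by
        rcases (ENNReal.toReal_eq_zero_iff _).mp h with h' | h'
        · exact h'
        · exact absurd h' (measure_ne_top μ s)
      exact Filter.eventuallyConst_set.2 (Or.inr (measure_eq_zero_iff_ae_notMem.mp hμ0))
    · have hμs : μ s = 1 := by
        have h2 : (μ s).toReal = 1 := by rw [hp_def] at h; exact h
        have h3 := ENNReal.ofReal_toReal (a := μ s) (measure_ne_top μ s)
        rw [h2] at h3
        simpa using h3.symm
      have hcompl0 : μ sᶜ = 0 := by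
        rw [measure_compl hs (measure_ne_top μ s), hμs, measure_univ, tsub_self]
      refine Filter.eventuallyConst_set.2 (Or.inl ?_)
      filter_upwards [measure_eq_zero_iff_ae_notMem.mp hcompl0] with x hx
      simpa using hx
  -- apply Birkhoff
  set f : (ℕ → ℝ) → ℝ := fun y => max (y 0) 0 with hf_def
  have hfm : Measurable f := (measurable_pi_apply 0).max measurable_const
  have hf0' : ∀ y, 0 ≤ f y := fun y => le_max_right _ _
  have hfΦ : ∀ ω, f (Φ ω) = max (X 0 ω) 0 := fun ω => rfl
  have hfi : Integrable f μ := by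
    rw [hμ_def]
    refine (integrable_map_measure hfm.aestronglyMeasurable hΦm.aemeasurable).mpr ?_
    have : (f ∘ Φ) = fun ω => max (X 0 ω) 0 := rfl
    rw [this]
    exact (hint 0).pos_part
  have hIeq : ∫ y, f y ∂μ = ∫ ω, X 0 ω ∂ℙ := by
    rw [hμ_def, integral_map hΦm.aemeasurable hfm.aestronglyMeasurable]
    refine integral_congr_ae ?_
    filter_upwards [hnonneg 0] with ω h
    simp [hfΦ, max_eq_left h]
  have happly := birkhoff μ herg hfm hf0' hfi
  rw [hIeq] at happly
  have hae2 := ae_of_ae_map hΦm.aemeasurable happly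
  filter_upwards [hae2, ae_all_iff.2 hnonneg] with ω h1 h2
  refine h1.congr fun n => ?_
  congr 1
  refine Finset.sum_congr rfl fun i _ => ?_
  have : f (T^[i] (Φ ω)) = max (X i ω) 0 := by
    simp only [hf_def, hTk, hΦ_def, Nat.zero_add]
  rw [this, max_eq_left (h2 i)]
end

section
/- Let (X_i)_{i≥0} be a stationary sequence of real random variables. Suppose that for every n, m and every k > n+1 there exist random variables (X̄_k, …, X̄_{k+m}) such that: (1) X_{k+j} ≤ X̄_{k+j} for all 0 ≤ j ≤ m; (2) (X̄_k, …, X̄_{k+m}) is independent of (X_0, …, X_n); (3) (X̄_k, …, X̄_{k+m}) converges in distribution to (X_0, …, X_m) as k → ∞; and (4) sup_{i ≥ k} P(X̄_i ≠ X_i) → 0 as k → ∞. Then the sequence (X_i) is mixing: for all bounded continuous f, g, E[f(X_0,…,X_n) g(X_k,…,X_{k+m})] → E[f(X_0,…,X_n)] E[g(X_0,…,X_m)]. -/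
open MeasureTheory ProbabilityTheory Filter

theorem stmt4 {Ω : Type*} [MeasureSpace Ω] [IsProbabilityMeasure (ℙ : Measure Ω)]
    (X : ℕ → Ω → ℝ)
    (hmeas : ∀ i, Measurable (X i))
    (hstat : ∀ i j : ℕ,
      Measure.map (fun ω (l : Fin (j + 1)) => X (i + l) ω) ℙ
        = Measure.map (fun ω (l : Fin (j + 1)) => X l ω) ℙ)
    (Xbar : ℕ → ℕ → ℕ → ℕ → Ω → ℝ)
    -- `Xbar n m k j` plays the role of `X̄_{k+j}` for `0 ≤ j ≤ m`, `k > n+1`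
    (hXbarmeas : ∀ n m k j, Measurable (Xbar n m k j))
    (hdom : ∀ n m k j, k > n + 1 → j ≤ m →
      ∀ᵐ ω ∂ℙ, X (k + j) ω ≤ Xbar n m k j ω)
    (hindep : ∀ n m k, k > n + 1 →
      IndepFun (fun ω (j : Fin (m + 1)) => Xbar n m k j ω)
        (fun ω (l : Fin (n + 1)) => X l ω) ℙ)
    (hweak : ∀ n m (g : (Fin (m + 1) → ℝ) → ℝ), Continuous g → (∃ Cg, ∀ x, |g x| ≤ Cg) →
      Tendsto (fun k => ∫ ω, g (fun j => Xbar n m k j ω) ∂ℙ) atTop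
        (nhds (∫ ω, g (fun j : Fin (m + 1) => X j ω) ∂ℙ)))
    (hsup : ∀ n m, Tendsto
      (fun k => ⨆ j : Fin (m + 1), (ℙ {ω | Xbar n m k j ω ≠ X (k + j) ω}).toReal)
      atTop (nhds 0)) :
    ∀ (n m : ℕ) (f : (Fin (n + 1) → ℝ) → ℝ) (g : (Fin (m + 1) → ℝ) → ℝ),
      Continuous f → Continuous g →
      (∃ Cf, ∀ x, |f x| ≤ Cf) → (∃ Cg, ∀ x, |g x| ≤ Cg) →
      Tendsto
        (fun k => ∫ ω, f (fun l => X l ω) * g (fun l => X (k + l) ω) ∂ℙ)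
        atTop
        (nhds ((∫ ω, f (fun l => X l ω) ∂ℙ) * ∫ ω, g (fun l : Fin (m + 1) => X l ω) ∂ℙ)) := by
  rintro n m f g hf hg ⟨Cf, hCf⟩ ⟨Cg, hCg⟩
  have hCf0 : 0 ≤ Cf := le_trans (abs_nonneg _) (hCf 0)
  have hCg0 : 0 ≤ Cg := le_trans (abs_nonneg _) (hCg 0)
  -- integrability helper
  have intb : ∀ (h : Ω → ℝ) (C : ℝ), Measurable h → (∀ ω, |h ω| ≤ C) → Integrable h ℙ := by
    intro h C hm hb
    exact ⟨hm.aestronglyMeasurable,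
      HasFiniteIntegral.of_bounded (C := C)
        (ae_of_all _ fun ω => by simpa [Real.norm_eq_abs] using hb ω)⟩
  set F : Ω → ℝ := fun ω => f (fun l : Fin (n + 1) => X l ω) with hFdef
  have hFmeas : Measurable F := hf.measurable.comp (measurable_pi_lambda _ fun l => hmeas l)
  have hFb : ∀ ω, |F ω| ≤ Cf := fun ω => hCf _
  have hGmeas : ∀ k, Measurable (fun ω => g (fun l : Fin (m + 1) => X (k + l) ω)) :=
    fun k => hg.measurable.comp (measurable_pi_lambda _ fun l => hmeas _)
  have hGbarmeas : ∀ k, Measurable (fun ω => g (fun j : Fin (m + 1) => Xbar n m k j ω)) :=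
    fun k => hg.measurable.comp (measurable_pi_lambda _ fun j => hXbarmeas _ _ _ _)
  have int1 : ∀ k, Integrable (fun ω => F ω * g (fun j : Fin (m + 1) => Xbar n m k j ω)) ℙ := by
    intro k
    refine intb _ (Cf * Cg) (hFmeas.mul (hGbarmeas k)) fun ω => ?_
    rw [abs_mul]
    exact mul_le_mul (hFb ω) (hCg _) (abs_nonneg _) hCf0
  have int2 : ∀ k, Integrable (fun ω =>
      F ω * (g (fun l : Fin (m + 1) => X (k + l) ω) - g (fun j : Fin (m + 1) => Xbar n m k j ω))) ℙ := by
    intro k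
    refine intb _ (Cf * (2 * Cg)) (hFmeas.mul ((hGmeas k).sub (hGbarmeas k))) fun ω => ?_
    rw [abs_mul]
    refine mul_le_mul (hFb ω) ?_ (abs_nonneg _) hCf0
    calc |g _ - g _| ≤ |g _| + |g _| := abs_sub _ _
      _ ≤ Cg + Cg := add_le_add (hCg _) (hCg _)
      _ = 2 * Cg := by ring
  -- decomposition
  have key : ∀ k, (∫ ω, F ω * g (fun l : Fin (m + 1) => X (k + l) ω) ∂ℙ)
      = (∫ ω, F ω * g (fun j : Fin (m + 1) => Xbar n m k j ω) ∂ℙ)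
        + ∫ ω, F ω * (g (fun l : Fin (m + 1) => X (k + l) ω)
            - g (fun j : Fin (m + 1) => Xbar n m k j ω)) ∂ℙ := by
    intro k
    rw [← integral_add (int1 k) (int2 k)]
    congr 1; funext ω; ring
  -- term A
  have hA : Tendsto (fun k => ∫ ω, F ω * g (fun j : Fin (m + 1) => Xbar n m k j ω) ∂ℙ) atTop
      (nhds ((∫ ω, F ω ∂ℙ) * ∫ ω, g (fun l : Fin (m + 1) => X l ω) ∂ℙ)) := by
    have h1 : Tendsto (fun k => (∫ ω, F ω ∂ℙ) * ∫ ω, g (fun j : Fin (m + 1) => Xbar n m k j ω) ∂ℙ)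
        atTop (nhds ((∫ ω, F ω ∂ℙ) * ∫ ω, g (fun l : Fin (m + 1) => X l ω) ∂ℙ)) :=
      (hweak n m g hg ⟨Cg, hCg⟩).const_mul _
    refine Tendsto.congr' ?_ h1
    filter_upwards [eventually_gt_atTop (n + 1)] with k hk
    have hind : IndepFun (fun ω => g (fun j : Fin (m + 1) => Xbar n m k j ω)) F ℙ :=
      (hindep n m k hk).comp hg.measurable hf.measurable
    have := hind.symm.integral_mul_eq_mul_integral hFmeas.aestronglyMeasurable (hGbarmeas k).aestronglyMeasurable
    calc (∫ ω, F ω ∂ℙ) * ∫ ω, g (fun j : Fin (m + 1) => Xbar n m k j ω) ∂ℙ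
        = ∫ ω, (F * fun ω => g (fun j : Fin (m + 1) => Xbar n m k j ω)) ω ∂ℙ := this.symm
      _ = ∫ ω, F ω * g (fun j : Fin (m + 1) => Xbar n m k j ω) ∂ℙ := rfl
  -- term B
  set S : ℕ → ℝ := fun k => ⨆ j : Fin (m + 1), (ℙ {ω | Xbar n m k j ω ≠ X (k + j) ω}).toReal with hSdef
  have hB : Tendsto (fun k => ∫ ω, F ω * (g (fun l : Fin (m + 1) => X (k + l) ω)
      - g (fun j : Fin (m + 1) => Xbar n m k j ω)) ∂ℙ) atTop (nhds 0) := by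
    have hlim : Tendsto (fun k => Cf * (2 * Cg) * ((m + 1 : ℝ) * S k)) atTop (nhds 0) := by
      have := ((hsup n m).const_mul ((m : ℝ) + 1)).const_mul (Cf * (2 * Cg))
      simpa using this
    refine squeeze_zero_norm (fun k => ?_) hlim
    set E : Fin (m + 1) → Set Ω := fun j => {ω | Xbar n m k j ω ≠ X (k + j) ω} with hEdef
    have hEmeas : ∀ j, MeasurableSet (E j) :=
      fun j => (measurableSet_eq_fun (hXbarmeas n m k j) (hmeas (k + j))).compl
    have hUmeas : MeasurableSet (⋃ j, E j) := MeasurableSet.iUnion hEmeas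
    have hS0 : ∀ j : Fin (m + 1), (ℙ (E j)).toReal ≤ S k := by
      intro j
      exact le_ciSup (f := fun j : Fin (m + 1) => (ℙ {ω | Xbar n m k j ω ≠ X (k + j) ω}).toReal) (Set.Finite.bddAbove (Set.finite_range _)) j
    -- pointwise bound
    have hpt : ∀ ω, ‖F ω * (g (fun l : Fin (m + 1) => X (k + l) ω)
        - g (fun j : Fin (m + 1) => Xbar n m k j ω))‖
        ≤ Cf * (2 * Cg) * (⋃ j, E j).indicator (fun _ => (1 : ℝ)) ω := by
      intro ω
      by_cases hω : ω ∈ ⋃ j, E j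
      · rw [Set.indicator_of_mem hω, mul_one, Real.norm_eq_abs, abs_mul]
        refine mul_le_mul (hFb ω) ?_ (abs_nonneg _) hCf0
        calc |g _ - g _| ≤ |g _| + |g _| := abs_sub _ _
          _ ≤ Cg + Cg := add_le_add (hCg _) (hCg _)
          _ = 2 * Cg := by ring
      · rw [Set.indicator_of_notMem hω, mul_zero]
        have heq : (fun l : Fin (m + 1) => X (k + l) ω) = fun j : Fin (m + 1) => Xbar n m k j ω := by
          funext j
          have : ω ∉ E j := fun h => hω (Set.mem_iUnion.2 ⟨j, h⟩)
          have h2 : Xbar n m k j ω = X (k + j) ω := not_not.1 this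
          exact h2.symm
        rw [heq, sub_self, mul_zero, norm_zero]
    -- integral bound
    have hind_int : Integrable ((⋃ j, E j).indicator (fun _ => (1 : ℝ))) ℙ :=
      (integrable_const 1).indicator hUmeas
    calc ‖∫ ω, F ω * (g (fun l : Fin (m + 1) => X (k + l) ω)
          - g (fun j : Fin (m + 1) => Xbar n m k j ω)) ∂ℙ‖
        ≤ ∫ ω, ‖F ω * (g (fun l : Fin (m + 1) => X (k + l) ω)
          - g (fun j : Fin (m + 1) => Xbar n m k j ω))‖ ∂ℙ := norm_integral_le_integral_norm _
      _ ≤ ∫ ω, Cf * (2 * Cg) * (⋃ j, E j).indicator (fun _ => (1 : ℝ)) ω ∂ℙ := by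
          refine integral_mono ((int2 k).norm) (hind_int.const_mul _) hpt
      _ = Cf * (2 * Cg) * (ℙ (⋃ j, E j)).toReal := by
          rw [integral_const_mul, integral_indicator_const (1 : ℝ) hUmeas, smul_eq_mul, mul_one, measureReal_def]
      _ ≤ Cf * (2 * Cg) * ((m + 1 : ℝ) * S k) := by
          refine mul_le_mul_of_nonneg_left ?_ (by positivity)
          have h1 : ℙ (⋃ j, E j) ≤ ∑ j : Fin (m + 1), ℙ (E j) := measure_iUnion_fintype_le ℙ E
          have hfin : ∀ j : Fin (m + 1), ℙ (E j) ≠ ⊤ := fun j => measure_ne_top _ _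
          have h2 : (ℙ (⋃ j, E j)).toReal ≤ (∑ j : Fin (m + 1), ℙ (E j)).toReal :=
            ENNReal.toReal_mono (by
              exact (ENNReal.sum_lt_top.2 fun j _ => (hfin j).lt_top).ne) h1
          rw [ENNReal.toReal_sum (fun j _ => hfin j)] at h2
          refine h2.trans ?_
          have h3 : ∑ j : Fin (m + 1), (ℙ (E j)).toReal ≤ (Finset.univ : Finset (Fin (m + 1))).card • S k :=
            Finset.sum_le_card_nsmul _ _ _ (fun j _ => hS0 j)
          simpa [Finset.card_univ, nsmul_eq_mul] using h3
  have hsum := hA.add hB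
  rw [add_zero] at hsum
  exact (tendsto_congr key).mpr hsum
end
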